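/- arXiv:2507.20270 — 2 statements merged into one kernel-verified Lean document; each statement's English description precedes it below -/
import Mathlib

section
/- Let q be a complex number with 0 < |q| < 1. Define the sequence α by α_0 = 1, and for n ≥ 1: α_{3n−1} = −q^{6n²−5n+1}, α_{3n} = q^{6n²−n} + q^{6n²+n}, and for n ≥ 0: α_{3n+1} = −q^{6n²+5n+1}. Then for every integer n ≥ 0, 1/(q;q)_{2n} = ∑_{i=0}^n α_i / ((q;q)_{n−i} (q;q)_{n+i}); that is, (α_n, 1/(q;q)_{2n}) is a Bailey pair relative to (1;q). -/
open scoped BigOperators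

/-- Finite q-Pochhammer symbol $(a;q)_n = \prod_{k=0}^{n-1}(1-aq^k)$. -/
noncomputable def qPoch (a q : ℂ) (n : ℕ) : ℂ := ∏ k ∈ Finset.range n, (1 - a * q ^ k)

/-- Infinite q-Pochhammer symbol $(a;q)_\infty = \prod_{k=0}^{\infty}(1-aq^k)$. -/
noncomputable def qPochInf (a q : ℂ) : ℂ := ∏' k : ℕ, (1 - a * q ^ k)

/-- Jacobi theta function $j(z;q) = (z;q)_\infty (q/z;q)_\infty (q;q)_\infty$. -/
noncomputable def jt (z q : ℂ) : ℂ := qPochInf z q * qPochInf (q / z) q * qPochInf q q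

/-- $J_{a,m} = j(q^a;q^m)$. -/
noncomputable def Jq (q : ℂ) (a m : ℕ) : ℂ := jt (q ^ a) (q ^ m)

/-- $\bar J_{a,m} = j(-q^a;q^m)$. -/
noncomputable def Jbq (q : ℂ) (a m : ℕ) : ℂ := jt (-q ^ a) (q ^ m)

/-- $J_m = (q^m;q^m)_\infty$. -/
noncomputable def Jmq (q : ℂ) (m : ℕ) : ℂ := qPochInf (q ^ m) (q ^ m)

/-- sign function: 1 for r ≥ 0, -1 for r < 0. -/
noncomputable def sg (r : ℤ) : ℂ := if 0 ≤ r then 1 else -1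

/-- Hecke-type series
$f_{a,b,c}(x,y,q) = \sum_{sg(r)=sg(s)} sg(r)(-1)^{r+s} x^r y^s q^{a\binom r2 + brs + c\binom s2}$. -/
noncomputable def hecke (a b c : ℤ) (x y q : ℂ) : ℂ :=
  ∑' p : ℤ × ℤ,
    if (0 ≤ p.1 ↔ 0 ≤ p.2) then
      sg p.1 * (-1 : ℂ) ^ (p.1 + p.2) * x ^ p.1 * y ^ p.2 *
        q ^ (a * (p.1 * (p.1 - 1) / 2) + b * p.1 * p.2 + c * (p.2 * (p.2 - 1) / 2))
    else 0

/-- Appell–Lerch sum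
$m(x,q,z) = \frac{1}{j(z;q)} \sum_{r\in\mathbb Z} \frac{(-1)^r q^{\binom r2} z^r}{1-q^{r-1}xz}$. -/
noncomputable def appell (x q z : ℂ) : ℂ :=
  (1 / jt z q) *
    ∑' r : ℤ, (-1 : ℂ) ^ r * q ^ (r * (r - 1) / 2) * z ^ r / (1 - q ^ (r - 1) * x * z)

namespace BPaux

variable (q : ℂ)

/-- q-binomial coefficient as a complex number, with integer lower index, 0 out of range. -/
noncomputable def C (M : ℕ) (k : ℤ) : ℂ :=
  if 0 ≤ k ∧ k ≤ (M : ℤ) then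
    qPoch q q M / (qPoch q q k.toNat * qPoch q q ((M : ℤ) - k).toNat)
  else 0

variable {q}

theorem P_zero : qPoch q q 0 = 1 := by simp [qPoch]

theorem P_succ (n : ℕ) : qPoch q q (n + 1) = qPoch q q n * (1 - q ^ (n + 1)) := by
  rw [qPoch, Finset.prod_range_succ, ← qPoch, pow_succ, mul_comm (q ^ n) q]

theorem P_ne (hq1 : ‖q‖ < 1) (n : ℕ) : qPoch q q n ≠ 0 := by
  rw [qPoch]
  apply Finset.prod_ne_zero_iff.2
  intro k _
  intro h
  have h1 : q * q ^ k = 1 := by linear_combination -h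
  have : ‖q * q ^ k‖ = 1 := by rw [h1, norm_one]
  rw [norm_mul, norm_pow] at this
  have h0 : (0:ℝ) ≤ ‖q‖ := norm_nonneg q
  have h2 : ‖q‖ ^ k ≤ 1 := pow_le_one₀ h0 hq1.le
  nlinarith [pow_nonneg h0 k]

theorem C_neg {k : ℤ} (hk : k < 0) (M : ℕ) : C q M k = 0 := by
  rw [C, if_neg]; omega

theorem C_gt {M : ℕ} {k : ℤ} (hk : (M : ℤ) < k) : C q M k = 0 := by
  rw [C, if_neg]; omega

theorem C_in {M : ℕ} {k : ℤ} (h1 : 0 ≤ k) (h2 : k ≤ (M : ℤ)) :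
    C q M k = qPoch q q M / (qPoch q q k.toNat * qPoch q q ((M : ℤ) - k).toNat) := by
  rw [C, if_pos ⟨h1, h2⟩]

theorem C_symm' (M : ℕ) (k k' : ℤ) (h : k' = (M : ℤ) - k) : C q M k = C q M k' := by
  subst h
  rcases lt_or_ge k 0 with hk | hk
  · rw [C_neg hk, C_gt (by omega)]
  rcases le_or_gt k (M : ℤ) with hk2 | hk2
  · rw [C_in hk hk2, C_in (by omega) (by omega)]
    rw [show (M : ℤ) - ((M : ℤ) - k) = k by ring, mul_comm]
  · rw [C_gt hk2, C_neg (by omega)]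


variable (hq1 : ‖q‖ < 1)
include hq1

theorem C_zero (M : ℕ) : C q M 0 = 1 := by
  rw [C_in le_rfl (by positivity)]
  simp [P_zero, div_self (mul_ne_zero (P_ne hq1 0) (P_ne hq1 M)), Int.toNat_natCast,
    P_ne hq1 M]

theorem C_top (M : ℕ) : C q M (M : ℤ) = 1 := by
  rw [C_in (by positivity) le_rfl]
  simp [P_zero, Int.toNat_natCast, div_self (P_ne hq1 M)]

theorem one_sub_ne (m : ℕ) : (1 : ℂ) - q ^ (m + 1) ≠ 0 := by
  intro h
  have h1 : q ^ (m + 1) = 1 := by linear_combination -h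
  have : ‖q ^ (m + 1)‖ = 1 := by rw [h1, norm_one]
  rw [norm_pow] at this
  have h0 : (0:ℝ) ≤ ‖q‖ := norm_nonneg q
  have h2 : ‖q‖ ^ (m + 1) ≤ ‖q‖ ^ 1 :=
    pow_le_pow_of_le_one h0 hq1.le (by omega)
  rw [pow_one] at h2
  linarith

/-- Pascal recurrence, form A. -/
theorem pascalA (M : ℕ) (k k' e : ℤ) (hk' : k' = k - 1) (he : e = (M : ℤ) + 1 - k) :
    C q (M + 1) k = C q M k + q ^ e * C q M k' := by
  subst hk' he
  rcases lt_or_ge k 0 with hk | hk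
  · rw [C_neg hk, C_neg hk, C_neg (by omega)]; ring
  rcases eq_or_lt_of_le hk with hk0 | hkpos
  · rw [← hk0]
    rw [C_zero hq1, C_zero hq1, C_neg (by omega)]; ring
  rcases lt_or_ge ((M : ℤ)) k with hgt | hle
  · rcases eq_or_lt_of_le (by omega : (M : ℤ) + 1 ≤ k) with htop | hgt2
    · rw [show k = ((M + 1 : ℕ) : ℤ) by push_cast; omega, C_top hq1,
        C_gt (by push_cast; omega),
        show ((M:ℕ):ℤ) + 1 - ((M+1:ℕ):ℤ) = 0 by push_cast; ring,
        show ((M+1:ℕ):ℤ) - 1 = ((M:ℕ):ℤ) by push_cast; ring, C_top hq1]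
      simp
    · rw [C_gt (by push_cast; omega), C_gt (by omega), C_gt (by omega)]; ring
  -- interior : 1 <= k <= M
  obtain ⟨a, rfl⟩ : ∃ a : ℕ, k = ((a : ℕ) : ℤ) := ⟨k.toNat, by omega⟩
  obtain ⟨a', rfl⟩ : ∃ a', a = a' + 1 := ⟨a - 1, by omega⟩
  obtain ⟨b, rfl⟩ : ∃ b, M = a' + 1 + b := ⟨M - (a' + 1), by omega⟩
  rw [C_in (by positivity) (by push_cast; omega),
      C_in (by positivity) (by push_cast; omega),
      C_in (by push_cast; omega) (by push_cast; omega)]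
  rw [show (((a' + 1 + b : ℕ) : ℤ) + 1 - ((a' + 1 : ℕ) : ℤ)) = ((b + 1 : ℕ) : ℤ) by
        push_cast; ring,
      zpow_natCast]
  rw [show (((a' + 1 + b + 1 : ℕ) : ℤ) - ((a' + 1 : ℕ) : ℤ)) = ((b + 1 : ℕ) : ℤ) by
        push_cast; ring]
  rw [show (((a' + 1 + b : ℕ) : ℤ) - ((a' + 1 : ℕ) : ℤ)) = ((b : ℕ) : ℤ) by push_cast; ring]
  rw [show (((a' + 1 : ℕ) : ℤ) - 1) = ((a' : ℕ) : ℤ) by push_cast; ring]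
  rw [show (((a' + 1 + b : ℕ) : ℤ) - ((a' : ℕ) : ℤ)) = ((b + 1 : ℕ) : ℤ) by push_cast; ring]
  simp only [Int.toNat_natCast]
  rw [P_succ (a' + 1 + b), P_succ b, P_succ a']
  have n1 := P_ne hq1 (a' + 1 + b)
  have n2 := P_ne hq1 b
  have n3 := P_ne hq1 a'
  have n4 := one_sub_ne hq1 (a' + b + 1)
  have n5 := one_sub_ne hq1 b
  have n6 := one_sub_ne hq1 a'
  rw [show a' + 1 + b + 1 = a' + b + 1 + 1 by ring]
  field_simp
  ring

/-- Pascal recurrence, form B. -/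
theorem pascalB (M : ℕ) (k k' : ℤ) (hk' : k' = k - 1) :
    C q (M + 1) k = q ^ k * C q M k + C q M k' := by
  subst hk'
  rcases lt_or_ge k 0 with hk | hk
  · rw [C_neg hk, C_neg hk, C_neg (by omega)]; ring
  rcases eq_or_lt_of_le hk with hk0 | hkpos
  · rw [← hk0]
    rw [C_zero hq1, C_zero hq1, C_neg (by omega)]; simp
  rcases lt_or_ge ((M : ℤ)) k with hgt | hle
  · rcases eq_or_lt_of_le (by omega : (M : ℤ) + 1 ≤ k) with htop | hgt2
    · rw [show k = ((M + 1 : ℕ) : ℤ) by push_cast; omega, C_top hq1,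
        C_gt (by push_cast; omega),
        show ((M+1:ℕ):ℤ) - 1 = ((M:ℕ):ℤ) by push_cast; ring, C_top hq1]
      ring
    · rw [C_gt (by push_cast; omega), C_gt (by omega), C_gt (by omega)]; ring
  obtain ⟨a, rfl⟩ : ∃ a : ℕ, k = ((a : ℕ) : ℤ) := ⟨k.toNat, by omega⟩
  obtain ⟨a', rfl⟩ : ∃ a', a = a' + 1 := ⟨a - 1, by omega⟩
  obtain ⟨b, rfl⟩ : ∃ b, M = a' + 1 + b := ⟨M - (a' + 1), by omega⟩
  rw [C_in (by positivity) (by push_cast; omega),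
      C_in (by positivity) (by push_cast; omega),
      C_in (by push_cast; omega) (by push_cast; omega)]
  rw [zpow_natCast]
  rw [show (((a' + 1 + b + 1 : ℕ) : ℤ) - ((a' + 1 : ℕ) : ℤ)) = ((b + 1 : ℕ) : ℤ) by
        push_cast; ring]
  rw [show (((a' + 1 + b : ℕ) : ℤ) - ((a' + 1 : ℕ) : ℤ)) = ((b : ℕ) : ℤ) by push_cast; ring]
  rw [show (((a' + 1 : ℕ) : ℤ) - 1) = ((a' : ℕ) : ℤ) by push_cast; ring]
  rw [show (((a' + 1 + b : ℕ) : ℤ) - ((a' : ℕ) : ℤ)) = ((b + 1 : ℕ) : ℤ) by push_cast; ring]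
  simp only [Int.toNat_natCast]
  rw [P_succ (a' + 1 + b), P_succ b, P_succ a']
  have n1 := P_ne hq1 (a' + 1 + b)
  have n2 := P_ne hq1 b
  have n3 := P_ne hq1 a'
  have n4 := one_sub_ne hq1 (a' + b + 1)
  have n5 := one_sub_ne hq1 b
  have n6 := one_sub_ne hq1 a'
  rw [show a' + 1 + b + 1 = a' + b + 1 + 1 by ring]
  field_simp
  ring

/-- Two-step decomposition. -/
theorem decomp (M T : ℕ) (k kk kk2 k3 e1 e2 : ℤ) (hT : T = M + 2) (hkk : kk = k + 1)
    (hkk2 : kk2 = k + 1) (hk3 : k3 = k) (h1 : e1 = k + 1) (h2 : e2 = (M : ℤ) + 1 - k) :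
    C q T kk = C q M k + q ^ e1 * C q M kk2 + q ^ e2 * C q (M + 1) k3 := by
  subst hT
  rw [hkk, hkk2, hk3, h1, h2]
  rw [show M + 2 = (M + 1) + 1 by ring,
    pascalA hq1 (M + 1) (k + 1) k ((M:ℤ) + 1 - k) (by ring) (by push_cast; ring),
    pascalB hq1 M (k + 1) k (by ring)]
  ring

theorem L3 (hq : q ≠ 0) (n s : ℕ) :
    q ^ ((n:ℤ) + 1 + 6*(s:ℤ)^2 + 2*s) * C q (2*n) ((n:ℤ) + 1 + 3*s)
      + q ^ ((n:ℤ) + 1 + 6*(s:ℤ)^2 - 4*s) * C q (2*n + 1) ((n:ℤ) + 3*s)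
    = q ^ ((n:ℤ) + 1 + 6*(s:ℤ)^2 - 4*s) * C q (2*n) ((n:ℤ) + 3*s - 1)
      + q ^ ((n:ℤ) + 1 + 6*(s:ℤ)^2 + 2*s) * C q (2*n + 1) ((n:ℤ) + 1 + 3*s) := by
  rw [C_symm' (2*n) ((n:ℤ) + 1 + 3*s) ((n:ℤ) - 1 - 3*s) (by push_cast; ring),
      C_symm' (2*n + 1) ((n:ℤ) + 3*s) ((n:ℤ) + 1 - 3*s) (by push_cast; ring),
      C_symm' (2*n) ((n:ℤ) + 3*s - 1) ((n:ℤ) + 1 - 3*s) (by push_cast; ring),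
      C_symm' (2*n + 1) ((n:ℤ) + 1 + 3*s) ((n:ℤ) - 3*s) (by push_cast; ring),
      pascalA hq1 (2*n) ((n:ℤ) + 1 - 3*s) ((n:ℤ) - 3*s) ((n:ℤ) + 3*s)
        (by ring) (by push_cast; ring),
      pascalB hq1 (2*n) ((n:ℤ) - 3*s) ((n:ℤ) - 1 - 3*s) (by ring)]
  have key : q ^ ((n:ℤ) + 1 + 6*(s:ℤ)^2 - 4*s) * q ^ ((n:ℤ) + 3*s)
      = q ^ ((n:ℤ) + 1 + 6*(s:ℤ)^2 + 2*s) * q ^ ((n:ℤ) - 3*s) := by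
    rw [← zpow_add₀ hq, ← zpow_add₀ hq]; congr 1; ring
  linear_combination C q (2*n) ((n:ℤ) - 3*s) * key

theorem L4 (hq : q ≠ 0) (n s : ℕ) :
    q ^ ((n:ℤ) + 1 + 6*(s:ℤ)^2 - 2*s) * C q (2*n) ((n:ℤ) + 1 - 3*s)
      + q ^ ((n:ℤ) + 1 + 6*(s:ℤ)^2 + 4*s) * C q (2*n + 1) ((n:ℤ) - 3*s)
    = q ^ ((n:ℤ) + 1 + 6*(s:ℤ)^2 - 2*s) * C q (2*n + 1) ((n:ℤ) + 1 - 3*s)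
      + q ^ ((n:ℤ) + 1 + 6*(s:ℤ)^2 + 4*s) * C q (2*n) ((n:ℤ) - 1 - 3*s) := by
  rw [pascalA hq1 (2*n) ((n:ℤ) + 1 - 3*s) ((n:ℤ) - 3*s) ((n:ℤ) + 3*s)
        (by ring) (by push_cast; ring),
      pascalB hq1 (2*n) ((n:ℤ) - 3*s) ((n:ℤ) - 1 - 3*s) (by ring)]
  have key : q ^ ((n:ℤ) + 1 + 6*(s:ℤ)^2 + 4*s) * q ^ ((n:ℤ) - 3*s)
      = q ^ ((n:ℤ) + 1 + 6*(s:ℤ)^2 - 2*s) * q ^ ((n:ℤ) + 3*s) := by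
    rw [← zpow_add₀ hq, ← zpow_add₀ hq]; congr 1; ring
  linear_combination C q (2*n) ((n:ℤ) - 3*s) * key

noncomputable def gblk (q : ℂ) (n m : ℕ) : ℂ :=
  (if m = 0 then C q (2*n) (n:ℤ) else
    q^(6*m^2 - m) * C q (2*n) ((n:ℤ) + 3*(m:ℤ)) + q^(6*m^2 + m) * C q (2*n) ((n:ℤ) - 3*(m:ℤ)))
  - q^(6*m^2 + 5*m + 1) * C q (2*n) ((n:ℤ) + 3*(m:ℤ) + 1)
  - q^(6*m^2 + 7*m + 2) * C q (2*n) ((n:ℤ) - 3*(m:ℤ) - 2)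

noncomputable def hblk (q : ℂ) (n m : ℕ) : ℂ :=
  (if m = 0 then
    q^((n:ℤ)+1) * C q (2*n) ((n:ℤ)+1) + q^((n:ℤ)+1) * C q (2*n+1) (n:ℤ)
   else
    q^(6*m^2 - m) * (q^((n:ℤ)+1+3*(m:ℤ)) * C q (2*n) ((n:ℤ)+1+3*(m:ℤ))
      + q^((n:ℤ)+1-3*(m:ℤ)) * C q (2*n+1) ((n:ℤ)+3*(m:ℤ)))
    + q^(6*m^2 + m) * (q^((n:ℤ)+1-3*(m:ℤ)) * C q (2*n) ((n:ℤ)+1-3*(m:ℤ))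
      + q^((n:ℤ)+1+3*(m:ℤ)) * C q (2*n+1) ((n:ℤ)-3*(m:ℤ))))
  - q^(6*m^2 + 5*m + 1) * (q^((n:ℤ)+2+3*(m:ℤ)) * C q (2*n) ((n:ℤ)+2+3*(m:ℤ))
      + q^((n:ℤ)-3*(m:ℤ)) * C q (2*n+1) ((n:ℤ)+1+3*(m:ℤ)))
  - q^(6*m^2 + 7*m + 2) * (q^((n:ℤ)-1-3*(m:ℤ)) * C q (2*n) ((n:ℤ)-1-3*(m:ℤ))
      + q^((n:ℤ)+3+3*(m:ℤ)) * C q (2*n+1) ((n:ℤ)-2-3*(m:ℤ)))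

noncomputable def Rrem (q : ℂ) (n m : ℕ) : ℂ :=
  - (q^((n:ℤ)+3+6*(m:ℤ)^2+8*(m:ℤ)) * C q (2*n) ((n:ℤ)+2+3*(m:ℤ)))
  - q^((n:ℤ)+5+6*(m:ℤ)^2+10*(m:ℤ)) * C q (2*n+1) ((n:ℤ)-2-3*(m:ℤ))

theorem gdiff (n m : ℕ) : gblk q (n+1) m = gblk q n m + hblk q n m := by
  have hc : ((n+1:ℕ):ℤ) = (n:ℤ) + 1 := by push_cast; ring
  by_cases hm : m = 0
  · subst hm
    simp only [gblk, hblk, if_pos rfl, if_true, eq_self_iff_true, hc]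
    have d0 := decomp hq1 (2*n) (2*(n+1)) ((n:ℤ)) ((n:ℤ)+1) ((n:ℤ)+1) ((n:ℤ))
      ((n:ℤ)+1) ((n:ℤ)+1) (by ring) (by ring) (by ring) (by ring) (by ring)
      (by push_cast; ring)
    have d3 := decomp hq1 (2*n) (2*(n+1)) ((n:ℤ) + 3*((0:ℕ):ℤ) + 1)
      ((n:ℤ) + 1 + 3*((0:ℕ):ℤ) + 1) ((n:ℤ)+2+3*((0:ℕ):ℤ)) ((n:ℤ)+1+3*((0:ℕ):ℤ))
      ((n:ℤ)+2+3*((0:ℕ):ℤ)) ((n:ℤ)-3*((0:ℕ):ℤ))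
      (by ring) (by ring) (by ring) (by ring) (by ring) (by push_cast; ring)
    have d4 := decomp hq1 (2*n) (2*(n+1)) ((n:ℤ) - 3*((0:ℕ):ℤ) - 2)
      ((n:ℤ) + 1 - 3*((0:ℕ):ℤ) - 2) ((n:ℤ)-1-3*((0:ℕ):ℤ)) ((n:ℤ)-2-3*((0:ℕ):ℤ))
      ((n:ℤ)-1-3*((0:ℕ):ℤ)) ((n:ℤ)+3+3*((0:ℕ):ℤ))
      (by ring) (by ring) (by ring) (by ring) (by ring) (by push_cast; ring)
    linear_combination d0 - (q:ℂ)^(6*0^2 + 5*0 + 1) * d3 - (q:ℂ)^(6*0^2 + 7*0 + 2) * d4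
  · simp only [gblk, hblk, if_neg hm, hc]
    have d1 := decomp hq1 (2*n) (2*(n+1)) ((n:ℤ) + 3*(m:ℤ)) ((n:ℤ) + 1 + 3*(m:ℤ))
      ((n:ℤ)+1+3*(m:ℤ)) ((n:ℤ)+3*(m:ℤ)) ((n:ℤ)+1+3*(m:ℤ)) ((n:ℤ)+1-3*(m:ℤ))
      (by ring) (by ring) (by ring) (by ring) (by ring) (by push_cast; ring)
    have d2 := decomp hq1 (2*n) (2*(n+1)) ((n:ℤ) - 3*(m:ℤ)) ((n:ℤ) + 1 - 3*(m:ℤ))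
      ((n:ℤ)+1-3*(m:ℤ)) ((n:ℤ)-3*(m:ℤ)) ((n:ℤ)+1-3*(m:ℤ)) ((n:ℤ)+1+3*(m:ℤ))
      (by ring) (by ring) (by ring) (by ring) (by ring) (by push_cast; ring)
    have d3 := decomp hq1 (2*n) (2*(n+1)) ((n:ℤ) + 3*(m:ℤ) + 1) ((n:ℤ) + 1 + 3*(m:ℤ) + 1)
      ((n:ℤ)+2+3*(m:ℤ)) ((n:ℤ)+1+3*(m:ℤ)) ((n:ℤ)+2+3*(m:ℤ)) ((n:ℤ)-3*(m:ℤ))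
      (by ring) (by ring) (by ring) (by ring) (by ring) (by push_cast; ring)
    have d4 := decomp hq1 (2*n) (2*(n+1)) ((n:ℤ) - 3*(m:ℤ) - 2) ((n:ℤ) + 1 - 3*(m:ℤ) - 2)
      ((n:ℤ)-1-3*(m:ℤ)) ((n:ℤ)-2-3*(m:ℤ)) ((n:ℤ)-1-3*(m:ℤ)) ((n:ℤ)+3+3*(m:ℤ))
      (by ring) (by ring) (by ring) (by ring) (by ring) (by push_cast; ring)
    linear_combination (q:ℂ)^(6*m^2 - m) * d1 + (q:ℂ)^(6*m^2 + m) * d2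
      - (q:ℂ)^(6*m^2 + 5*m + 1) * d3 - (q:ℂ)^(6*m^2 + 7*m + 2) * d4

omit hq1 in
theorem qm (hq : q ≠ 0) (E : ℕ) (k a : ℤ) (h : (E : ℤ) + k = a) :
    (q : ℂ) ^ E * q ^ k = q ^ a := by
  rw [← zpow_natCast q E, ← zpow_add₀ hq, h]

theorem hbase (hq : q ≠ 0) (n : ℕ) : hblk q n 0 = Rrem q n 0 := by
  simp only [hblk, Rrem, if_pos rfl, if_true, eq_self_iff_true]
  have s1 : C q (2*n) ((n:ℤ)+1) = C q (2*n) ((n:ℤ)-1-3*((0:ℕ):ℤ)) :=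
    C_symm' (2*n) _ _ (by push_cast; ring)
  have s2 : C q (2*n+1) ((n:ℤ)) = C q (2*n+1) ((n:ℤ)+1+3*((0:ℕ):ℤ)) :=
    C_symm' (2*n+1) _ _ (by push_cast; ring)
  have m1 : (q:ℂ)^(6*0^2 + 5*0 + 1) * q^((n:ℤ)+2+3*((0:ℕ):ℤ))
      = q^((n:ℤ)+3+6*((0:ℕ):ℤ)^2+8*((0:ℕ):ℤ)) := qm hq _ _ _ (by push_cast; ring)
  have m2 : (q:ℂ)^(6*0^2 + 5*0 + 1) * q^((n:ℤ)-3*((0:ℕ):ℤ)) = q^((n:ℤ)+1) :=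
    qm hq _ _ _ (by push_cast; ring)
  have m3 : (q:ℂ)^(6*0^2 + 7*0 + 2) * q^((n:ℤ)-1-3*((0:ℕ):ℤ)) = q^((n:ℤ)+1) :=
    qm hq _ _ _ (by push_cast; ring)
  have m4 : (q:ℂ)^(6*0^2 + 7*0 + 2) * q^((n:ℤ)+3+3*((0:ℕ):ℤ))
      = q^((n:ℤ)+5+6*((0:ℕ):ℤ)^2+10*((0:ℕ):ℤ)) := qm hq _ _ _ (by push_cast; ring)
  linear_combination q^((n:ℤ)+1) * s1 + q^((n:ℤ)+1) * s2
    - C q (2*n) ((n:ℤ)+2+3*((0:ℕ):ℤ)) * m1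
    - C q (2*n+1) ((n:ℤ)+1+3*((0:ℕ):ℤ)) * m2
    - C q (2*n) ((n:ℤ)-1-3*((0:ℕ):ℤ)) * m3
    - C q (2*n+1) ((n:ℤ)-2-3*((0:ℕ):ℤ)) * m4

theorem Rrem_shift (n M : ℕ) : Rrem q n M
    = -(q^((n:ℤ)+1+6*((M+1:ℕ):ℤ)^2-4*((M+1:ℕ):ℤ)) * C q (2*n) ((n:ℤ)+3*((M+1:ℕ):ℤ)-1))
      - q^((n:ℤ)+1+6*((M+1:ℕ):ℤ)^2-2*((M+1:ℕ):ℤ)) * C q (2*n+1) ((n:ℤ)+1-3*((M+1:ℕ):ℤ)) := by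
  rw [Rrem,
    show ((n:ℤ)+3+6*(M:ℤ)^2+8*(M:ℤ)) = (n:ℤ)+1+6*((M+1:ℕ):ℤ)^2-4*((M+1:ℕ):ℤ) by
      push_cast; ring,
    show ((n:ℤ)+2+3*(M:ℤ)) = (n:ℤ)+3*((M+1:ℕ):ℤ)-1 by push_cast; ring,
    show ((n:ℤ)+5+6*(M:ℤ)^2+10*(M:ℤ)) = (n:ℤ)+1+6*((M+1:ℕ):ℤ)^2-2*((M+1:ℕ):ℤ) by
      push_cast; ring,
    show ((n:ℤ)-2-3*(M:ℤ)) = (n:ℤ)+1-3*((M+1:ℕ):ℤ) by push_cast; ring]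

theorem hstep (hq : q ≠ 0) (n M : ℕ) :
    Rrem q n M + hblk q n (M+1) = Rrem q n (M+1) := by
  have hle1 : (M+1) ≤ 6*(M+1)^2 := by nlinarith
  rw [Rrem_shift hq1]
  simp only [hblk, Rrem, if_neg (Nat.succ_ne_zero M)]
  have m1 : (q:ℂ)^(6*(M+1)^2 - (M+1)) * q^((n:ℤ)+1+3*((M+1:ℕ):ℤ))
      = q^((n:ℤ)+1+6*((M+1:ℕ):ℤ)^2+2*((M+1:ℕ):ℤ)) :=
    qm hq _ _ _ (by push_cast [Nat.cast_sub hle1]; ring)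
  have m2 : (q:ℂ)^(6*(M+1)^2 - (M+1)) * q^((n:ℤ)+1-3*((M+1:ℕ):ℤ))
      = q^((n:ℤ)+1+6*((M+1:ℕ):ℤ)^2-4*((M+1:ℕ):ℤ)) :=
    qm hq _ _ _ (by push_cast [Nat.cast_sub hle1]; ring)
  have m3 : (q:ℂ)^(6*(M+1)^2 + (M+1)) * q^((n:ℤ)+1-3*((M+1:ℕ):ℤ))
      = q^((n:ℤ)+1+6*((M+1:ℕ):ℤ)^2-2*((M+1:ℕ):ℤ)) :=
    qm hq _ _ _ (by push_cast; ring)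
  have m4 : (q:ℂ)^(6*(M+1)^2 + (M+1)) * q^((n:ℤ)+1+3*((M+1:ℕ):ℤ))
      = q^((n:ℤ)+1+6*((M+1:ℕ):ℤ)^2+4*((M+1:ℕ):ℤ)) :=
    qm hq _ _ _ (by push_cast; ring)
  have m5 : (q:ℂ)^(6*(M+1)^2 + 5*(M+1) + 1) * q^((n:ℤ)+2+3*((M+1:ℕ):ℤ))
      = q^((n:ℤ)+3+6*((M+1:ℕ):ℤ)^2+8*((M+1:ℕ):ℤ)) :=
    qm hq _ _ _ (by push_cast; ring)
  have m6 : (q:ℂ)^(6*(M+1)^2 + 5*(M+1) + 1) * q^((n:ℤ)-3*((M+1:ℕ):ℤ))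
      = q^((n:ℤ)+1+6*((M+1:ℕ):ℤ)^2+2*((M+1:ℕ):ℤ)) :=
    qm hq _ _ _ (by push_cast; ring)
  have m7 : (q:ℂ)^(6*(M+1)^2 + 7*(M+1) + 2) * q^((n:ℤ)-1-3*((M+1:ℕ):ℤ))
      = q^((n:ℤ)+1+6*((M+1:ℕ):ℤ)^2+4*((M+1:ℕ):ℤ)) :=
    qm hq _ _ _ (by push_cast; ring)
  have m8 : (q:ℂ)^(6*(M+1)^2 + 7*(M+1) + 2) * q^((n:ℤ)+3+3*((M+1:ℕ):ℤ))
      = q^((n:ℤ)+5+6*((M+1:ℕ):ℤ)^2+10*((M+1:ℕ):ℤ)) :=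
    qm hq _ _ _ (by push_cast; ring)
  linear_combination (L3 hq1 hq n (M+1)) + (L4 hq1 hq n (M+1))
    + C q (2*n) ((n:ℤ)+1+3*((M+1:ℕ):ℤ)) * m1
    + C q (2*n+1) ((n:ℤ)+3*((M+1:ℕ):ℤ)) * m2
    + C q (2*n) ((n:ℤ)+1-3*((M+1:ℕ):ℤ)) * m3
    + C q (2*n+1) ((n:ℤ)-3*((M+1:ℕ):ℤ)) * m4
    - C q (2*n) ((n:ℤ)+2+3*((M+1:ℕ):ℤ)) * m5
    - C q (2*n+1) ((n:ℤ)+1+3*((M+1:ℕ):ℤ)) * m6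
    - C q (2*n) ((n:ℤ)-1-3*((M+1:ℕ):ℤ)) * m7
    - C q (2*n+1) ((n:ℤ)-2-3*((M+1:ℕ):ℤ)) * m8

theorem sum_h (hq : q ≠ 0) (n M : ℕ) :
    ∑ m ∈ Finset.range (M+1), hblk q n m = Rrem q n M := by
  induction M with
  | zero => simpa using hbase hq1 hq n
  | succ M ih =>
    rw [Finset.sum_range_succ, ih, hstep hq1 hq n M]

theorem Rrem_top (n : ℕ) : Rrem q n (n+1) = 0 := by
  rw [Rrem, C_gt (by push_cast; omega), C_neg (by push_cast; omega)]
  ring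

theorem gblk_top (n : ℕ) : gblk q n (n+1) = 0 := by
  rw [gblk, if_neg (Nat.succ_ne_zero n), C_gt (by push_cast; omega),
    C_neg (by push_cast; omega), C_gt (by push_cast; omega), C_neg (by push_cast; omega)]
  ring

theorem main_sum (hq : q ≠ 0) (n : ℕ) :
    ∑ m ∈ Finset.range (n+1), gblk q n m = 1 := by
  induction n with
  | zero =>
    rw [Finset.sum_range_one, gblk, if_pos rfl,
      show ((0:ℕ):ℤ)+3*((0:ℕ):ℤ)+1 = (1:ℤ) by norm_num,
      show ((0:ℕ):ℤ)-3*((0:ℕ):ℤ)-2 = (-2:ℤ) by norm_num,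
      show 2*0 = 0 by norm_num,
      C_gt (M := 0) (k := 1) (by norm_num), C_neg (k := -2) (by norm_num) 0,
      C_top hq1 0]
    ring
  | succ n ih =>
    have : ∀ m ∈ Finset.range (n+2), gblk q (n+1) m = gblk q n m + hblk q n m :=
      fun m _ => gdiff hq1 n m
    rw [Finset.sum_congr rfl this, Finset.sum_add_distrib, sum_h hq1 hq n (n+1),
      Rrem_top hq1, Finset.sum_range_succ, gblk_top hq1, ih]
    ring

omit hq1 in
theorem sum_triple (F : ℕ → ℂ) (K : ℕ) :
    ∑ i ∈ Finset.range (3*K), F i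
      = ∑ m ∈ Finset.range K, (F (3*m) + F (3*m+1) + F (3*m+2)) := by
  induction K with
  | zero => simp
  | succ K ih =>
    rw [show 3*(K+1) = 3*K+2+1 by ring, Finset.sum_range_succ,
      show 3*K+2 = 3*K+1+1 by ring, Finset.sum_range_succ, Finset.sum_range_succ, ih,
      Finset.sum_range_succ]
    ring

theorem C_val (n i : ℕ) (hi : i ≤ n) :
    C q (2*n) ((n:ℤ)-(i:ℤ))
      = qPoch q q (2*n) / (qPoch q q (n-i) * qPoch q q (n+i)) := by
  rw [C_in (by omega) (by push_cast; omega),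
    show (((n:ℤ)-(i:ℤ))).toNat = n-i by omega,
    show (((2*n:ℕ):ℤ)-((n:ℤ)-(i:ℤ))).toNat = n+i by push_cast; omega]

theorem blockD (α : ℕ → ℂ) (hα0 : α 0 = 1)
    (hα1 : ∀ k : ℕ, 1 ≤ k → α (3 * k - 1) = -q ^ (6 * k ^ 2 - 5 * k + 1))
    (hα2 : ∀ k : ℕ, 1 ≤ k → α (3 * k) = q ^ (6 * k ^ 2 - k) + q ^ (6 * k ^ 2 + k))
    (hα3 : ∀ k : ℕ, α (3 * k + 1) = -q ^ (6 * k ^ 2 + 5 * k + 1))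
    (n m : ℕ) :
    α (3*m) * C q (2*n) ((n:ℤ)-((3*m:ℕ):ℤ)) + α (3*m+1) * C q (2*n) ((n:ℤ)-((3*m+1:ℕ):ℤ))
      + α (3*m+2) * C q (2*n) ((n:ℤ)-((3*m+2:ℕ):ℤ)) = gblk q n m := by
  have h2 : α (3*m+2) = -q ^ (6*m^2 + 7*m + 2) := by
    have e1 : 3*(m+1) - 1 = 3*m+2 := by omega
    have e2 : 6*(m+1)^2 - 5*(m+1) + 1 = 6*m^2+7*m+2 := by
      have h6 : 6*(m+1)^2 = 6*m^2+12*m+6 := by ring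
      omega
    have := hα1 (m+1) (by omega)
    rwa [e1, e2] at this
  have c1 : ((3*m:ℕ):ℤ) = 3*(m:ℤ) := by push_cast; ring
  have c2 : ((3*m+1:ℕ):ℤ) = 3*(m:ℤ)+1 := by push_cast; ring
  have c3 : ((3*m+2:ℕ):ℤ) = 3*(m:ℤ)+2 := by push_cast; ring
  rw [c1, c2, c3, h2, hα3 m]
  have s2 : C q (2*n) ((n:ℤ)-(3*(m:ℤ)+1)) = C q (2*n) ((n:ℤ)+3*(m:ℤ)+1) :=
    C_symm' _ _ _ (by push_cast; ring)
  have s3 : C q (2*n) ((n:ℤ)-(3*(m:ℤ)+2)) = C q (2*n) ((n:ℤ)-3*(m:ℤ)-2) := by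
    congr 1; ring
  rw [s2, s3]
  by_cases hm : m = 0
  · subst hm
    rw [show (3*0 : ℕ) = 0 by norm_num, hα0, gblk, if_pos rfl]
    have s1 : C q (2*n) ((n:ℤ)-3*((0:ℕ):ℤ)) = C q (2*n) ((n:ℤ)) := by
      norm_num
    rw [s1]
    ring
  · rw [hα2 m (by omega), gblk, if_neg hm]
    have s1 : C q (2*n) ((n:ℤ)+3*(m:ℤ)) = C q (2*n) ((n:ℤ)-3*(m:ℤ)) :=
      C_symm' _ _ _ (by push_cast; ring)
    rw [s1]
    ring

theorem final (hq : q ≠ 0) (α : ℕ → ℂ) (hα0 : α 0 = 1)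
    (hα1 : ∀ k : ℕ, 1 ≤ k → α (3 * k - 1) = -q ^ (6 * k ^ 2 - 5 * k + 1))
    (hα2 : ∀ k : ℕ, 1 ≤ k → α (3 * k) = q ^ (6 * k ^ 2 - k) + q ^ (6 * k ^ 2 + k))
    (hα3 : ∀ k : ℕ, α (3 * k + 1) = -q ^ (6 * k ^ 2 + 5 * k + 1)) (n : ℕ) :
    1 / qPoch q q (2 * n) =
      ∑ i ∈ Finset.range (n + 1), α i / (qPoch q q (n - i) * qPoch q q (n + i)) := by
  have hP2 := P_ne hq1 (2*n)
  have step1 : ∀ i ∈ Finset.range (n+1),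
      α i / (qPoch q q (n - i) * qPoch q q (n + i))
        = α i * C q (2*n) ((n:ℤ)-(i:ℤ)) / qPoch q q (2*n) := by
    intro i hi
    rw [Finset.mem_range] at hi
    rw [C_val hq1 n i (by omega)]
    have h1 := P_ne hq1 (n-i)
    have h2 := P_ne hq1 (n+i)
    field_simp
  rw [Finset.sum_congr rfl step1, ← Finset.sum_div]
  have step2 : ∑ i ∈ Finset.range (n+1), α i * C q (2*n) ((n:ℤ)-(i:ℤ))
      = ∑ i ∈ Finset.range (3*(n+1)), α i * C q (2*n) ((n:ℤ)-(i:ℤ)) := by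
    apply Finset.sum_subset (Finset.range_subset_range.2 (by omega))
    intro i hi hni
    rw [Finset.mem_range] at hni
    rw [C_neg (by omega) (2*n)]
    ring
  rw [step2, sum_triple,
    Finset.sum_congr rfl (fun m _ => blockD hq1 α hα0 hα1 hα2 hα3 n m),
    main_sum hq1 hq n]

end BPaux

theorem stmt2 (q : ℂ) (hq0 : 0 < ‖q‖) (hq1 : ‖q‖ < 1)
    (α : ℕ → ℂ) (hα0 : α 0 = 1)
    (hα1 : ∀ n : ℕ, 1 ≤ n → α (3 * n - 1) = -q ^ (6 * n ^ 2 - 5 * n + 1))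
    (hα2 : ∀ n : ℕ, 1 ≤ n → α (3 * n) = q ^ (6 * n ^ 2 - n) + q ^ (6 * n ^ 2 + n))
    (hα3 : ∀ n : ℕ, α (3 * n + 1) = -q ^ (6 * n ^ 2 + 5 * n + 1)) :
    ∀ n : ℕ, 1 / qPoch q q (2 * n) =
      ∑ i ∈ Finset.range (n + 1), α i / (qPoch q q (n - i) * qPoch q q (n + i)) := by
  have hq : q ≠ 0 := fun h => by simp [h] at hq0
  exact fun n => BPaux.final hq1 hq α hα0 hα1 hα2 hα3 n
end

section
/- Let q be a complex number with 0 < |q| < 1. Define the sequence α by α_0 = 1, and for n ≥ 1: α_{3n−1} = (−q^{6n²−5n+1} + q^{6n²+n})/(1−q), α_{3n} = (q^{6n²−n} − q^{6n²+5n+1})/(1−q), and for n ≥ 0: α_{3n+1} = 0 (with the convention that the value at index 0 is α_0 = 1). Then for every integer n ≥ 0, 1/(q;q)_{2n} = ∑_{i=0}^n α_i / ((q;q)_{n−i} (q^2;q)_{n+i}); that is, (α_n, 1/(q;q)_{2n}) is a Bailey pair relative to (q;q). -/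
open scoped BigOperators

open Finset

section Aux
variable (q : ℂ)

/- ===== Pochhammer basics ===== -/

lemma qPoch_succ (a : ℂ) (n : ℕ) : qPoch a q (n+1) = qPoch a q n * (1 - a * q^n) :=
  Finset.prod_range_succ _ _

lemma qPoch_pow_eq (s n : ℕ) : qPoch (q^s) q n = ∏ k ∈ Finset.range n, (1 - q^(s+k)) := by
  unfold qPoch; exact Finset.prod_congr rfl fun k _ => by rw [← pow_add]

lemma one_sub_pow_ne (hq1 : ‖q‖ < 1) {m : ℕ} (hm : 1 ≤ m) : (1:ℂ) - q^m ≠ 0 := by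
  intro h
  have h1 : q ^ m = 1 := by linear_combination -h
  have h2 : ‖q^m‖ < 1 := by
    rw [norm_pow]
    exact pow_lt_one₀ (norm_nonneg q) hq1 (by omega)
  rw [h1] at h2; simp at h2

lemma qPoch_pow_ne (hq1 : ‖q‖ < 1) {s : ℕ} (hs : 1 ≤ s) (n : ℕ) :
    qPoch (q^s) q n ≠ 0 := by
  rw [qPoch_pow_eq]
  exact Finset.prod_ne_zero_iff.2 fun k _ => one_sub_pow_ne q hq1 (by omega)

lemma P_eq_pow1 : qPoch q q = qPoch (q^1) q := by rw [pow_one]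

lemma P_ne (hq1 : ‖q‖ < 1) (n : ℕ) : qPoch q q n ≠ 0 := by
  rw [P_eq_pow1]; exact qPoch_pow_ne q hq1 le_rfl n

lemma P_succ (n : ℕ) : qPoch q q (n+1) = qPoch q q n * (1 - q^(n+1)) := by
  rw [qPoch_succ]; rw [← pow_succ']

lemma P_add (a b : ℕ) : qPoch q q (a+b) = qPoch q q a * qPoch (q^(a+1)) q b := by
  unfold qPoch
  rw [Finset.prod_range_add]
  congr 1
  exact Finset.prod_congr rfl fun k _ => by ring_nf

/- ===== Gaussian binomial ===== -/

noncomputable def gb : ℕ → ℕ → ℂ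
  | 0, 0 => 1
  | 0, _+1 => 0
  | _+1, 0 => 1
  | n+1, k+1 => gb n (k+1) + q ^ (n-k) * gb n k

@[simp] lemma gb_zero (n : ℕ) : gb q n 0 = 1 := by cases n <;> rfl

lemma gb_eq_zero : ∀ {n k : ℕ}, n < k → gb q n k = 0
  | 0, _+1, _ => rfl
  | n+1, k+1, h => by
      rw [gb, gb_eq_zero (by omega), gb_eq_zero (by omega)]; ring

@[simp] lemma gb_diag (n : ℕ) : gb q n n = 1 := by
  induction n with
  | zero => rfl
  | succ n ih => rw [gb, gb_eq_zero q (by omega), ih, Nat.sub_self]; ring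

lemma gb_pascal1 (n k : ℕ) : gb q (n+1) (k+1) = gb q n (k+1) + q ^ (n-k) * gb q n k := rfl

lemma gb_absorb : ∀ n k : ℕ, (1 - q^(k+1)) * gb q n (k+1) = (1 - q^(n-k)) * gb q n k := by
  intro n
  induction n with
  | zero =>
    intro k
    rcases k with _ | k
    · simp [gb]
    · simp [gb_eq_zero q (by omega : (0:ℕ) < k+1+1), gb_eq_zero q (by omega : (0:ℕ) < k+1)]
  | succ n ih =>
    intro k
    rcases k with _ | j
    · rw [gb_pascal1]
      simp only [gb_zero, Nat.sub_zero]
      have h := ih 0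
      rw [Nat.sub_zero, gb_zero] at h
      linear_combination h
    · by_cases hj : j < n
      · obtain ⟨d, rfl⟩ : ∃ d, n = j + 1 + d := ⟨n - (j+1), by omega⟩
        rw [gb_pascal1, gb_pascal1]
        rw [show j + 1 + d - (j+1) = d from by omega,
            show j + 1 + d - j = d + 1 from by omega,
            show j + 1 + d + 1 - (j+1) = d + 1 from by omega]
        have h1 := ih (j+1)
        rw [show j + 1 + d - (j+1) = d from by omega] at h1
        have h2 := ih j
        rw [show j + 1 + d - j = d + 1 from by omega] at h2
        linear_combination h1 + q^(d+1) * h2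
      · rw [gb_eq_zero q (by omega : n+1 < j+1+1),
            show n + 1 - (j+1) = 0 from by omega]
        simp

lemma gb_pascal2 (n k : ℕ) : gb q (n+1) (k+1) = q ^ (k+1) * gb q n (k+1) + gb q n k := by
  have h := gb_absorb q n k
  rw [gb_pascal1]
  linear_combination h

lemma gb_mul : ∀ n k : ℕ, k ≤ n →
    gb q n k * (qPoch q q k * qPoch q q (n-k)) = qPoch q q n := by
  intro n
  induction n with
  | zero => intro k hk; interval_cases k; simp [qPoch]
  | succ n ih =>
    intro k hk
    rcases k with _ | j
    · simp [qPoch]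
    · rcases Nat.lt_or_ge n (j+1) with h | h
      · -- j+1 = n+1
        have hj : j = n := by omega
        subst hj
        rw [gb_diag, Nat.sub_self, one_mul]
        simp [qPoch]
      · -- j+1 <= n
        obtain ⟨D, rfl⟩ : ∃ D, n = j + 1 + D := ⟨n - (j+1), by omega⟩
        have h1 := ih (j+1) (by omega)
        have h2 := ih j (by omega)
        rw [show j + 1 + D - (j+1) = D from by omega] at h1
        rw [show j + 1 + D - j = D + 1 from by omega] at h2
        rw [show j + 1 + D + 1 - (j+1) = D + 1 from by omega]
        rw [gb_pascal2]
        rw [P_succ q j] at h1 ⊢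
        rw [P_succ q D] at h2 ⊢
        rw [show j + 1 + D + 1 = (j + 1 + D) + 1 from rfl, P_succ q (j+1+D)]
        linear_combination q^(j+1)*(1-q^(D+1))*h1 + (1-q^(j+1))*h2
end Aux

section BD
variable (q : ℂ)

lemma ch_succ (k : ℕ) : (k+1)*((k+1)-1)/2 = k*(k-1)/2 + k := by
  rcases k with _ | j
  · rfl
  · show (j+2)*(j+1)/2 = (j+1)*j/2 + (j+1)
    rw [show (j+2)*(j+1) = (j+1)*j + (j+1)*2 from by ring]
    rw [Nat.add_mul_div_right _ _ (by norm_num : (0:ℕ) < 2)]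

noncomputable def BB (N : ℕ) : ℂ :=
  ∑ k ∈ Finset.range (N+1), (-1:ℂ)^k * q^(k*(k-1)/2) * gb q (N-k) k

noncomputable def DD (N : ℕ) : ℂ :=
  ∑ k ∈ Finset.range (N+1), (-1:ℂ)^k * q^(k*(k-1)/2 + k) * gb q (N-k) k

lemma BDrec1 (N : ℕ) : BB q (N+2) = DD q (N+1) - DD q N := by
  unfold BB DD
  rw [Finset.sum_range_succ]
  rw [Nat.sub_self, gb_eq_zero q (by omega : 0 < N+2), mul_zero, add_zero]
  rw [Finset.sum_range_succ' _ (N+1), Finset.sum_range_succ' _ (N+1)]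
  simp only [pow_zero, one_mul, Nat.sub_zero, gb_zero, mul_one]
  have : ∀ k ∈ Finset.range (N+1),
      (-1:ℂ)^(k+1) * q^((k+1)*((k+1)-1)/2) * gb q (N+2-(k+1)) (k+1) =
      (-1:ℂ)^(k+1) * q^((k+1)*((k+1)-1)/2 + (k+1)) * gb q (N+1-(k+1)) (k+1)
        - (-1:ℂ)^k * q^(k*(k-1)/2 + k) * gb q (N-k) k := by
    intro k hk
    have hkN : k ≤ N := by simpa using Nat.lt_succ_iff.mp (Finset.mem_range.mp hk)
    rw [show N+2-(k+1) = (N-k)+1 from by omega, show N+1-(k+1) = N-k from by omega]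
    rw [gb_pascal2, ch_succ]
    ring
  rw [Finset.sum_congr rfl this, Finset.sum_sub_distrib]
  ring

lemma BDrec2 (N : ℕ) : DD q (N+2) = DD q (N+1) - q^(N+1) * BB q N := by
  unfold BB DD
  rw [Finset.sum_range_succ]
  rw [Nat.sub_self, gb_eq_zero q (by omega : 0 < N+2), mul_zero, add_zero]
  rw [Finset.sum_range_succ' _ (N+1), Finset.sum_range_succ' _ (N+1)]
  simp only [pow_zero, one_mul, Nat.sub_zero, gb_zero, mul_one, zero_add, add_zero]
  have : ∀ k ∈ Finset.range (N+1),
      (-1:ℂ)^(k+1) * q^((k+1)*((k+1)-1)/2 + (k+1)) * gb q (N+2-(k+1)) (k+1) =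
      (-1:ℂ)^(k+1) * q^((k+1)*((k+1)-1)/2 + (k+1)) * gb q (N+1-(k+1)) (k+1)
        - q^(N+1) * ((-1:ℂ)^k * q^(k*(k-1)/2) * gb q (N-k) k) := by
    intro k hk
    have hkN : k ≤ N := by simpa using Nat.lt_succ_iff.mp (Finset.mem_range.mp hk)
    rw [show N+2-(k+1) = (N-k)+1 from by omega, show N+1-(k+1) = N-k from by omega]
    rw [gb_pascal1, ch_succ]
    by_cases h2k : 2*k ≤ N
    · rw [show N-k-k = N-2*k from by omega]
      have he : k*(k-1)/2 + k + (k+1) + (N-2*k) = k*(k-1)/2 + (N+1) := by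
        generalize k*(k-1)/2 = c
        omega
      have hpw : q^(k*(k-1)/2 + k + (k+1)) * q^(N - 2*k) = q^(k*(k-1)/2) * q^(N+1) := by
        rw [← pow_add, ← pow_add, he]
      linear_combination ((-1:ℂ))^(k+1) * gb q (N-k) k * hpw
    · rw [gb_eq_zero q (by omega : N-k < k)]
      ring
  rw [Finset.sum_congr rfl this, Finset.sum_sub_distrib, ← Finset.mul_sum]
  ring

lemma Brec3 (N : ℕ) : BB q (N+3) = -(q^(N+1)) * BB q N := by
  have h1 := BDrec1 q (N+1)
  have h2 := BDrec2 q N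
  rw [show N+3 = (N+1)+2 from rfl, h1, h2]
  ring

lemma BB0 : BB q 0 = 1 := by simp [BB]
lemma BB1 : BB q 1 = 1 := by
  rw [BB, Finset.sum_range_succ, Finset.sum_range_succ, Finset.sum_range_zero]
  rw [gb_eq_zero q (by omega : 1-1 < 1)]
  simp
lemma BB2 : BB q 2 = 0 := by
  rw [BB, Finset.sum_range_succ, Finset.sum_range_succ, Finset.sum_range_succ,
      Finset.sum_range_zero]
  rw [gb_eq_zero q (by omega : 2-2 < 2)]
  norm_num

lemma Bclosed (hq0 : q ≠ 0) : ∀ m : ℕ,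
    BB q (6*m) * q^m = q^(6*m^2) ∧ BB q (6*m+1) = q^(6*m^2+m) ∧ BB q (6*m+2) = 0 ∧
    BB q (6*m+3) = -q^(6*m^2+5*m+1) ∧ BB q (6*m+4) = -q^(6*m^2+7*m+2) ∧
    BB q (6*m+5) = 0 := by
  intro m
  induction m with
  | zero =>
    refine ⟨by simpa using BB0 q, by simpa using BB1 q, by simpa using BB2 q, ?_, ?_, ?_⟩
    · have := Brec3 q 0
      rw [BB0 q] at this
      simpa using this
    · have := Brec3 q 1
      rw [BB1 q] at this
      simpa using this
    · have := Brec3 q 2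
      rw [BB2 q] at this
      simpa using this
  | succ m ih =>
    obtain ⟨i0, i1, i2, i3, i4, i5⟩ := ih
    have e0 : BB q (6*(m+1)) * q^(m+1) = q^(6*(m+1)^2) := by
      have h := Brec3 q (6*m+3)
      rw [show 6*m+3+3 = 6*(m+1) from by omega, i3] at h
      rw [h, show 6*(m+1)^2 = (6*m^2+5*m+1) + (6*m+4) + (m+1) from by ring]
      rw [pow_add, pow_add]
      ring
    have e1 : BB q (6*(m+1)+1) = q^(6*(m+1)^2+(m+1)) := by
      have h := Brec3 q (6*m+4)
      rw [show 6*m+4+3 = 6*(m+1)+1 from by omega, i4] at h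
      rw [h, show 6*(m+1)^2+(m+1) = (6*m^2+7*m+2) + (6*m+5) from by ring]
      rw [pow_add]
      ring
    have e2 : BB q (6*(m+1)+2) = 0 := by
      have h := Brec3 q (6*m+5)
      rw [show 6*m+5+3 = 6*(m+1)+2 from by omega, i5] at h
      simpa using h
    refine ⟨e0, e1, e2, ?_, ?_, ?_⟩
    · have h := Brec3 q (6*(m+1))
      rw [show 6*(m+1)+3 = 6*(m+1)+3 from rfl] at h
      have hc : BB q (6*(m+1)+3) * q^(m+1) = -q^(6*(m+1)^2+5*(m+1)+1) * q^(m+1) := by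
        rw [h]
        have h2 : -(q^(6*(m+1)+1)) * BB q (6*(m+1)) * q^(m+1)
            = -(q^(6*(m+1)+1)) * q^(6*(m+1)^2) := by rw [mul_assoc, e0]
        rw [h2, neg_mul, neg_mul, neg_inj, ← pow_add, ← pow_add]
        congr 1
        ring
      exact mul_right_cancel₀ (pow_ne_zero _ hq0) hc
    · have h := Brec3 q (6*(m+1)+1)
      rw [show 6*(m+1)+1+3 = 6*(m+1)+4 from by omega, e1] at h
      rw [h, neg_mul, neg_inj, ← pow_add]
      congr 1
      ring
    · have h := Brec3 q (6*(m+1)+2)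
      rw [show 6*(m+1)+2+3 = 6*(m+1)+5 from by omega, e2] at h
      simpa using h
end BD

section Tel
variable (q : ℂ)

noncomputable def po (x : ℂ) (s n : ℕ) : ℂ := ∏ k ∈ Finset.range n, (1 - x * q^(s+k))

@[simp] lemma po_zero (x : ℂ) (s : ℕ) : po q x s 0 = 1 := Finset.prod_range_zero _

lemma po_succ_last (x : ℂ) (s n : ℕ) : po q x s (n+1) = po q x s n * (1 - x*q^(s+n)) :=
  Finset.prod_range_succ _ _

lemma po_succ_first (x : ℂ) (s n : ℕ) : po q x s (n+1) = (1 - x*q^s) * po q x (s+1) n := by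
  unfold po
  rw [Finset.prod_range_succ', add_zero, mul_comm]
  congr 1
  exact Finset.prod_congr rfl fun k _ => by rw [show s+(k+1) = s+1+k from by omega]

lemma po_one (x : ℂ) (s : ℕ) : po q x s 1 = 1 - x*q^s := by
  rw [po_succ_last, po_zero, one_mul, add_zero]

lemma ch_succ' (k : ℕ) : (k+1)*k/2 = k*(k-1)/2 + k := by
  have := ch_succ k
  rwa [Nat.add_sub_cancel] at this

lemma TEL (x : ℂ) : ∀ (L m : ℕ), m + 1 ≤ L →
    ∑ k ∈ Finset.range (m+1),
      (-1:ℂ)^k * q^(k*(k-1)/2) * gb q L k * po q x 0 k * (1 - x*q^(2*k)) * po q x (L+1+k) (L-k)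
    = (-1:ℂ)^m * q^((m+1)*m/2) * gb q (L-1) m * po q x 0 (m+1) * po q x (L+m+1) (L-m) := by
  intro L m
  induction m with
  | zero =>
    intro hm
    obtain ⟨L', rfl⟩ : ∃ L', L = L' + 1 := ⟨L - 1, by omega⟩
    rw [Finset.sum_range_one]
    rw [show L'+1-1 = L' from by omega, show L'+1-0 = L'+1 from by omega]
    rw [show L'+1+0+1 = L'+1+1 from by omega]
    simp only [pow_zero, mul_zero, one_mul, gb_zero, po_zero, mul_one]
    rw [show (1:ℕ)*0/2 = 0 from rfl, pow_zero]
    rw [po_succ_last q x 0 0, po_zero, po_succ_first]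
    try ring
  | succ m ih =>
    intro hm
    obtain ⟨d, rfl⟩ : ∃ d, L = m + 2 + d := ⟨L - (m+2), by omega⟩
    rw [Finset.sum_range_succ, ih (by omega)]
    rw [show m+2+d-(m+1) = d+1 from by omega, show m+2+d-m = d+2 from by omega,
        show m+2+d-1 = m+1+d from by omega,
        show m+2+d+m+1 = 2*m+d+3 from by omega,
        show m+2+d+1+(m+1) = 2*m+d+4 from by omega,
        show m+2+d+(m+1)+1 = 2*m+d+4 from by omega]
    simp only [Nat.add_sub_cancel]
    rw [show (m+1+1)*(m+1)/2 = (m+1)*m/2 + (m+1) from ch_succ' (m+1)]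
    have hsplit : po q x (2*m+d+3) (d+2) = (1 - x*q^(2*m+d+3)) * po q x (2*m+d+3+1) (d+1) :=
      po_succ_first q x (2*m+d+3) (d+1)
    rw [show (2:ℕ)*m+d+3+1 = 2*m+d+4 from by omega] at hsplit
    rw [hsplit]
    rw [show po q x 0 (m+1+1) = po q x 0 (m+1) * (1 - x*q^(m+1)) from by
          rw [po_succ_last, zero_add]]
    rw [show gb q (m+2+d) (m+1) = q^(m+1) * gb q (m+1+d) (m+1) + gb q (m+1+d) m from by
          rw [show m+2+d = (m+1+d)+1 from by omega]; exact gb_pascal2 q (m+1+d) m]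
    have habs := gb_absorb q (m+1+d) m
    rw [show m+1+d-m = d+1 from by omega] at habs
    linear_combination (-((-1:ℂ)^m * q^((m+1)*m/2) * po q x 0 (m+1) * po q x (2*m+d+4) (d+1)
      * x * q^(2*m+2))) * habs

lemma OrthZero (x : ℂ) (L : ℕ) :
    ∑ k ∈ Finset.range (L+2),
      (-1:ℂ)^k * q^(k*(k-1)/2) * gb q (L+1) k * po q x 0 k * (1 - x*q^(2*k))
        * po q x (L+1+1+k) (L+1-k) = 0 := by
  rw [Finset.sum_range_succ, TEL q x (L+1) L (by omega)]
  rw [show L+1-1 = L from by omega, Nat.sub_self, Nat.add_sub_cancel_left,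
      show L+1+L+1 = 2*L+2 from by omega, show L+1+1+(L+1) = 2*L+3 from by omega]
  rw [po_one, po_zero, gb_diag, gb_diag]
  rw [show 2*(L+1) = 2*L+2 from by omega]
  ring
end Tel

section Assemble
variable (q : ℂ)

lemma po_pow_eq (t s n : ℕ) : po q (q^t) s n = ∏ k ∈ Finset.range n, (1 - q^(t+s+k)) := by
  unfold po
  exact Finset.prod_congr rfl fun k _ => by rw [← pow_add, ← Nat.add_assoc]

lemma po_pow_ne (hq1 : ‖q‖ < 1) {t s : ℕ} (h : 1 ≤ t + s) (n : ℕ) :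
    po q (q^t) s n ≠ 0 := by
  rw [po_pow_eq]
  exact Finset.prod_ne_zero_iff.2 fun k _ => one_sub_pow_ne q hq1 (by omega)

lemma po_zero_shift (x : ℂ) (n : ℕ) : po q x 0 n = qPoch x q n := by
  unfold po qPoch
  exact Finset.prod_congr rfl fun k _ => by rw [Nat.zero_add]

lemma qPoch_sq (m : ℕ) : qPoch q q (m+1) = (1 - q) * qPoch (q^2) q m := by
  unfold qPoch
  rw [Finset.prod_range_succ']
  rw [mul_comm]
  congr 1
  · norm_num
  · exact Finset.prod_congr rfl fun k _ => by ring

lemma sum_tri (f : ℕ → ℕ → ℂ) : ∀ n : ℕ,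
    ∑ i ∈ Finset.range (n+1), ∑ j ∈ Finset.range (i+1), f i j
    = ∑ j ∈ Finset.range (n+1), ∑ i ∈ Finset.Icc j n, f i j := by
  intro n
  induction n with
  | zero => simp
  | succ n ih =>
    rw [Finset.sum_range_succ, ih]
    conv_rhs => rw [Finset.sum_range_succ]
    rw [Finset.Icc_self, Finset.sum_singleton]
    have : ∀ j ∈ Finset.range (n+1),
        ∑ i ∈ Finset.Icc j (n+1), f i j = ∑ i ∈ Finset.Icc j n, f i j + f (n+1) j := by
      intro j hj
      have hj' : j ≤ n := by simpa [Nat.lt_succ_iff] using hj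
      exact Finset.sum_Icc_succ_top (by omega : j ≤ n+1) _
    rw [Finset.sum_congr rfl this, Finset.sum_add_distrib]
    rw [Finset.sum_range_succ _ (n+1)]
    ring

/-- Step A: `α n (1-q) = (1 - q^(2n+1)) * BB (2n)` -/
lemma stepA (hq0 : 0 < ‖q‖) (hq1 : ‖q‖ < 1)
    (α : ℕ → ℂ) (hα0 : α 0 = 1)
    (hα1 : ∀ n : ℕ, 1 ≤ n →
      α (3 * n - 1) = (-q ^ (6 * n ^ 2 - 5 * n + 1) + q ^ (6 * n ^ 2 + n)) / (1 - q))
    (hα2 : ∀ n : ℕ, 1 ≤ n →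
      α (3 * n) = (q ^ (6 * n ^ 2 - n) - q ^ (6 * n ^ 2 + 5 * n + 1)) / (1 - q))
    (hα3 : ∀ n : ℕ, α (3 * n + 1) = 0) :
    ∀ n : ℕ, α n * (1 - q) = (1 - q^(2*n+1)) * BB q (2*n) := by
  have hqne : q ≠ 0 := by
    intro h; rw [h] at hq0; simp at hq0
  have h1q : (1:ℂ) - q ≠ 0 := by
    have := one_sub_pow_ne q hq1 (le_refl 1); rwa [pow_one] at this
  intro n
  obtain ⟨m, rfl | rfl | rfl⟩ : ∃ m, n = 3*m ∨ n = 3*m+1 ∨ n = 3*m+2 := ⟨n/3, by omega⟩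
  · -- n = 3m
    rcases Nat.eq_zero_or_pos m with rfl | hm1
    · norm_num [hα0, BB0]
    obtain ⟨i0, _, _, _, _, _⟩ := Bclosed q hqne m
    rw [hα2 m hm1, div_mul_cancel₀ _ h1q]
    rw [show 2*(3*m) = 6*m from by ring]
    have hm6 : m ≤ 6*m^2 := by nlinarith [hm1]
    apply mul_right_cancel₀ (pow_ne_zero m hqne)
    rw [sub_mul, ← pow_add, ← pow_add, Nat.sub_add_cancel hm6]
    rw [mul_assoc, i0]
    rw [show 6*m^2+5*m+1+m = 6*m+1+6*m^2 from by ring, pow_add]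
    ring
  · -- n = 3m+1
    rw [hα3 m]
    rw [show 2*(3*m+1) = 6*m+2 from by ring]
    obtain ⟨_, _, i2, _, _, _⟩ := Bclosed q hqne m
    rw [i2]
    ring
  · -- n = 3m+2
    obtain ⟨_, _, _, _, i4, _⟩ := Bclosed q hqne m
    have hA := hα1 (m+1) (by omega)
    rw [show 3*(m+1)-1 = 3*m+2 from by omega] at hA
    rw [show (6*(m+1)^2 : ℕ) = 6*m^2+12*m+6 from by ring] at hA
    rw [show (6*m^2+12*m+6 - 5*(m+1) + 1 : ℕ) = 6*m^2+7*m+2 from by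
          generalize m^2 = M; omega] at hA
    rw [show (6*m^2+12*m+6 + (m+1) : ℕ) = 6*m^2+13*m+7 from by omega] at hA
    rw [hA, div_mul_cancel₀ _ h1q]
    rw [show 2*(3*m+2) = 6*m+4 from by ring, show 6*m+4+1 = 6*m+5 from by omega, i4]
    rw [show (6*m^2+13*m+7 : ℕ) = 6*m+5 + (6*m^2+7*m+2) from by ring, pow_add]
    ring
end Assemble

theorem stmt3 (q : ℂ) (hq0 : 0 < ‖q‖) (hq1 : ‖q‖ < 1)
    (α : ℕ → ℂ) (hα0 : α 0 = 1)
    (hα1 : ∀ n : ℕ, 1 ≤ n →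
      α (3 * n - 1) = (-q ^ (6 * n ^ 2 - 5 * n + 1) + q ^ (6 * n ^ 2 + n)) / (1 - q))
    (hα2 : ∀ n : ℕ, 1 ≤ n →
      α (3 * n) = (q ^ (6 * n ^ 2 - n) - q ^ (6 * n ^ 2 + 5 * n + 1)) / (1 - q))
    (hα3 : ∀ n : ℕ, α (3 * n + 1) = 0) :
    ∀ n : ℕ, 1 / qPoch q q (2 * n) =
      ∑ i ∈ Finset.range (n + 1), α i / (qPoch q q (n - i) * qPoch (q ^ 2) q (n + i)) := by
  have hqne : q ≠ 0 := by
    intro h; rw [h] at hq0; simp at hq0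
  have h1q : (1:ℂ) - q ≠ 0 := by
    have := one_sub_pow_ne q hq1 (le_refl 1); rwa [pow_one] at this
  have hPne : ∀ m : ℕ, qPoch q q m ≠ 0 := P_ne q hq1
  have hQne : ∀ m : ℕ, qPoch (q^2) q m ≠ 0 := qPoch_pow_ne q hq1 (by omega)
  have hA := stepA q hq0 hq1 α hα0 hα1 hα2 hα3
  -- the inverse-Bailey weights
  set W : ℕ → ℕ → ℂ := fun i j =>
    (1 - q^(2*i+1)) * (-1:ℂ)^(i-j) * q^((i-j)*((i-j)-1)/2) * qPoch q q (i+j)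
      / ((1-q) * qPoch q q (i-j) * qPoch q q (2*j)) with hW
  -- Step A': α i is the W-sum
  have hαW : ∀ i : ℕ, α i = ∑ j ∈ Finset.range (i+1), W i j := by
    intro i
    set g : ℕ → ℂ := fun k => (-1:ℂ)^k * q^(k*(k-1)/2) * gb q (2*i-k) k with hg
    set c : ℂ := (1 - q^(2*i+1))/(1-q) with hc
    have h1 : ∀ j ∈ Finset.range (i+1), W i j = c * g (i-j) := by
      intro j hj
      have hji : j ≤ i := by simpa [Nat.lt_succ_iff] using hj
      have hgb := gb_mul q (i+j) (i-j) (by omega)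
      rw [show (i+j) - (i-j) = 2*j from by omega] at hgb
      rw [hW, hg, hc]
      simp only
      rw [show 2*i-(i-j) = i+j from by omega]
      rw [div_mul_eq_mul_div, div_eq_div_iff
        (mul_ne_zero (mul_ne_zero h1q (hPne (i-j))) (hPne (2*j))) h1q]
      rw [← hgb]
      ring
    have h2 : ∑ j ∈ Finset.range (i+1), g (i-j) = ∑ j ∈ Finset.range (i+1), g j := by
      have := Finset.sum_range_reflect g (i+1)
      simpa [Nat.add_sub_cancel] using this
    have hBBdef : BB q (2*i) = ∑ k ∈ Finset.range (2*i+1), g k := rfl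
    have h0 : ∑ k ∈ Finset.Ico (i+1) (2*i+1), g k = 0 := by
      refine Finset.sum_eq_zero fun k hk => ?_
      have hk' := Finset.mem_Ico.mp hk
      rw [hg]
      simp only
      rw [gb_eq_zero q (by omega), mul_zero]
    have h3 : ∑ k ∈ Finset.range (i+1), g k = BB q (2*i) := by
      rw [hBBdef, Finset.range_eq_Ico, Finset.range_eq_Ico,
        ← Finset.sum_Ico_consecutive _ (by omega : 0 ≤ i+1) (by omega : i+1 ≤ 2*i+1), h0,
        add_zero]
    rw [Finset.sum_congr rfl h1, ← Finset.mul_sum, h2, h3]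
    apply mul_right_cancel₀ h1q
    rw [hA i, hc]
    field_simp
  intro n
  -- expand α and swap the double sum
  have hexp : ∀ i ∈ Finset.range (n+1),
      α i / (qPoch q q (n - i) * qPoch (q ^ 2) q (n + i))
      = ∑ j ∈ Finset.range (i+1), W i j / (qPoch q q (n - i) * qPoch (q ^ 2) q (n + i)) := by
    intro i _
    rw [hαW i, Finset.sum_div]
  rw [Finset.sum_congr rfl hexp,
    sum_tri (fun i j => W i j / (qPoch q q (n - i) * qPoch (q ^ 2) q (n + i))) n]
  -- orthogonality: inner sum vanishes except j = n
  have horth : ∀ j ∈ Finset.range (n+1),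
      ∑ i ∈ Finset.Icc j n, W i j / (qPoch q q (n - i) * qPoch (q ^ 2) q (n + i))
      = if j = n then 1 / qPoch q q (2*n) else 0 := by
    intro j hjmem
    have hjn : j ≤ n := by simpa [Nat.lt_succ_iff] using hjmem
    by_cases hj : j = n
    · subst hj
      rw [if_pos rfl, Finset.Icc_self, Finset.sum_singleton]
      rw [hW]
      simp only [Nat.sub_self, show (0*(0-1)/2 : ℕ) = 0 from rfl, pow_zero, one_mul, mul_one,
        show j+j = 2*j from by omega, show qPoch q q 0 = 1 from rfl]
      have e1 : qPoch q q (2*j+1) = (1-q) * qPoch (q^2) q (2*j) := qPoch_sq q (2*j)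
      have e2 : qPoch q q (2*j+1) = qPoch q q (2*j) * (1 - q^(2*j+1)) := P_succ q (2*j)
      rw [div_div, div_eq_div_iff
        (mul_ne_zero (mul_ne_zero h1q (hPne (2*j))) (hQne (2*j)))
        (hPne (2*j))]
      linear_combination (qPoch q q (2*j)) * e1 - (qPoch q q (2*j)) * e2
    · rw [if_neg hj]
      obtain ⟨L, rfl⟩ : ∃ L, n = j + L + 1 := ⟨n - j - 1, by omega⟩
      rw [← Finset.Ico_add_one_right_eq_Icc, Finset.sum_Ico_eq_sum_range]
      rw [show j + L + 1 + 1 - j = L+2 from by omega]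
      set x : ℂ := q^(2*j+1) with hx
      have hterm : ∀ k ∈ Finset.range (L+2),
          W (j+k) j / (qPoch q q (j + L + 1 - (j+k)) * qPoch (q ^ 2) q (j + L + 1 + (j+k)))
          = ((-1:ℂ)^k * q^(k*(k-1)/2) * gb q (L+1) k * po q x 0 k * (1 - x*q^(2*k))
              * po q x (L+1+1+k) (L+1-k)) * (1/(qPoch q q (L+1) * qPoch q q (2*(j+L+1)+1))) := by
        intro k hk
        have hkL : k ≤ L+1 := by simpa [Nat.lt_succ_iff] using Finset.mem_range.mp hk
        have hgb := gb_mul q (L+1) k hkL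
        have hP1 : qPoch q q (2*j+k) = qPoch q q (2*j) * po q x 0 k := by
          rw [P_add q (2*j) k, po_zero_shift, hx]
        have hP2 : qPoch q q (2*(j+L+1)+1)
            = qPoch q q (2*j+L+k+2) * po q x (L+1+1+k) (L+1-k) := by
          rw [show 2*(j+L+1)+1 = (2*j+L+k+2) + (L+1-k) from by omega, P_add]
          congr 1
          rw [hx, po_pow_eq, qPoch_pow_eq]
          exact Finset.prod_congr rfl fun t _ => by
            rw [show 2*j+L+k+2+1+t = 2*j+1+(L+1+1+k)+t from by omega]
        have hQpm : (1-q) * qPoch (q^2) q (j+L+1+(j+k)) = qPoch q q (2*j+L+k+2) := by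
          have h := qPoch_sq q (j+L+1+(j+k))
          rw [show j+L+1+(j+k)+1 = 2*j+L+k+2 from by omega] at h
          exact h.symm
        have hxpow : (1:ℂ) - q^(2*(j+k)+1) = 1 - x*q^(2*k) := by
          rw [hx, ← pow_add, show 2*j+1+2*k = 2*(j+k)+1 from by omega]
        have hpo1 : po q x (L+1+1+k) (L+1-k) ≠ 0 := by
          rw [hx]; exact po_pow_ne q hq1 (by omega) _
        rw [hW]
        simp only
        rw [show (j+k) - j = k from by omega, show (j+k) + j = 2*j+k from by omega,
            show j + L + 1 - (j+k) = L+1-k from by omega]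
        rw [hxpow, hP1, hP2, div_div, mul_one_div]
        rw [div_eq_div_iff
          (mul_ne_zero (mul_ne_zero (mul_ne_zero h1q (hPne k)) (hPne (2*j)))
            (mul_ne_zero (hPne (L+1-k)) (hQne (j+L+1+(j+k)))))
          (mul_ne_zero (hPne (L+1)) (mul_ne_zero (hPne (2*j+L+k+2)) hpo1))]
        linear_combination
          (-((1 - x*q^(2*k)) * (-1:ℂ)^k * q^(k*(k-1)/2) * qPoch q q (2*j) * po q x 0 k
             * po q x (L+1+1+k) (L+1-k) * qPoch q q (2*j+L+k+2))) * hgb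
          + (-((1 - x*q^(2*k)) * (-1:ℂ)^k * q^(k*(k-1)/2) * qPoch q q (2*j) * po q x 0 k
             * po q x (L+1+1+k) (L+1-k) * gb q (L+1) k * qPoch q q k * qPoch q q (L+1-k))) * hQpm
      rw [Finset.sum_congr rfl hterm, ← Finset.sum_mul, OrthZero q x L, zero_mul]
  rw [Finset.sum_congr rfl horth, Finset.sum_ite_eq' (Finset.range (n+1)) n
    (fun _ => 1 / qPoch q q (2*n))]
  simp
end
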